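/- Let f : ℝ → ℝ be convex, let V be a finite type, let q be a probability distribution on V with q(i) > 0 for all i, fix n ∈ V with q(n) < 1, and let h be any probability distribution on V. Then ∑_{i ∈ V} q(i)·f(h(i)/q(i)) ≥ q(n)·f(h(n)/q(n)) + (1 − q(n))·f((1 − h(n))/(1 − q(n))). In particular, the f-divergence D_f(h‖q) is bounded below by the binary f-divergence between the Bernoulli distributions (h(n), 1−h(n)) and (q(n), 1−q(n)). -/

import Mathlib

/-- Data-processing-type lower bound: the `f`-divergence `D_f(h‖q)` is at least
the binary `f`-divergence between the Bernoulli distributions `(h n, 1 - h n)`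
and `(q n, 1 - q n)`. -/
theorem stmt_3 {V : Type*} [Fintype V] [Nonempty V]
    (f : ℝ → ℝ) (hf : ConvexOn ℝ Set.univ f)
    (q : V → ℝ) (hq_pos : ∀ i, 0 < q i) (hq_sum : ∑ i, q i = 1)
    (n : V) (hqn : q n < 1)
    (h : V → ℝ) (hh_nonneg : ∀ i, 0 ≤ h i) (hh_sum : ∑ i, h i = 1) :
    q n * f (h n / q n) + (1 - q n) * f ((1 - h n) / (1 - q n)) ≤
      ∑ i, q i * f (h i / q i) := by
  classical
  set c := 1 - q n with hc
  have hc0 : 0 < c := by simp [hc]; linarith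
  set t := Finset.univ.erase n with ht
  have hqt : ∑ i ∈ t, q i = c := by
    have := Finset.add_sum_erase Finset.univ q (Finset.mem_univ n)
    rw [hq_sum] at this
    simp [ht, hc]; linarith
  have hht : ∑ i ∈ t, h i = 1 - h n := by
    have := Finset.add_sum_erase Finset.univ h (Finset.mem_univ n)
    rw [hh_sum] at this
    linarith
  have key := hf.map_sum_le (t := t) (w := fun i => q i / c)
    (p := fun i => h i / q i)
    (fun i _ => div_nonneg (hq_pos i).le hc0.le)
    (by rw [← Finset.sum_div, hqt, div_self hc0.ne'])
    (fun i _ => Set.mem_univ _)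
  have hsum : ∑ i ∈ t, (q i / c) • (h i / q i) = (1 - h n) / c := by
    rw [← hht, Finset.sum_div]
    refine Finset.sum_congr rfl fun i _ => ?_
    rw [smul_eq_mul]
    field_simp [(hq_pos i).ne']
  rw [hsum] at key
  have key2 : c * f ((1 - h n) / c) ≤ ∑ i ∈ t, q i * f (h i / q i) := by
    have := mul_le_mul_of_nonneg_left key hc0.le
    calc c * f ((1 - h n) / c) ≤ c * ∑ i ∈ t, (q i / c) • f (h i / q i) := this
      _ = ∑ i ∈ t, q i * f (h i / q i) := by
          rw [Finset.mul_sum]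
          refine Finset.sum_congr rfl fun i _ => ?_
          simp [smul_eq_mul]
          field_simp
  have hsplit := Finset.add_sum_erase Finset.univ (fun i => q i * f (h i / q i))
    (Finset.mem_univ n)
  rw [← hsplit]
  exact add_le_add_right key2 _
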